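/- arXiv:1608.04553 — 4 statements merged into one kernel-verified Lean document; each statement's English description precedes it below -/
import Mathlib

section
/- Let D : ℝ × ℝ² → ℝ be twice continuously differentiable in a neighborhood of (t, r) with ∇D(t,r) ≠ 0; set N := ∇D(t,r)/‖∇D(t,r)‖, T := R_{−π/2}N (so if N = (N₁,N₂) then T = (N₂,−N₁)), and λ := −D′_t(t,r)/‖∇D(t,r)‖. Then the map s ↦ ∇D(t+s, r + s·λ·N)/‖∇D(t+s, r + s·λ·N)‖ is differentiable at s = 0 with derivative equal to (⟨T, ∇D′_t(t,r) + λ·D″(t,r)N⟩/‖∇D(t,r)‖)·T. (Consequently the angular velocity of rotation of the isoline is ω = −⟨∇D′_t + λ·D″N, T⟩/‖∇D‖, and the unit normal along the moving isoline satisfies N(t+dt, r₊(dt)) = N − ω·T·dt + o(dt).) -/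
open Real Set
open scoped RealInnerProductSpace
noncomputable section

/-- The plane ℝ². -/
abbrev Plane := EuclideanSpace ℝ (Fin 2)

/-- Spatial gradient ∇D of the field. -/
def sgrad (D : ℝ × Plane → ℝ) (t : ℝ) (r : Plane) : Plane :=
  gradient (fun p => D (t, p)) r

/-- Partial time derivative D′_t of the field. -/
def dT (D : ℝ × Plane → ℝ) (t : ℝ) (r : Plane) : ℝ :=
  deriv (fun s => D (s, r)) t

/-- Second partial time derivative D″_tt of the field. -/
def dTT (D : ℝ × Plane → ℝ) (t : ℝ) (r : Plane) : ℝ :=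
  deriv (fun s => dT D s r) t

/-- Spatial gradient ∇D′_t of the partial time derivative. -/
def sgradDt (D : ℝ × Plane → ℝ) (t : ℝ) (r : Plane) : Plane :=
  gradient (fun p => dT D t p) r

/-- Spatial Hessian D″ applied to a vector v. -/
def hess (D : ℝ × Plane → ℝ) (t : ℝ) (r : Plane) (v : Plane) : Plane :=
  fderiv ℝ (fun p => sgrad D t p) r v

/-- Clockwise rotation through π/2, i.e. R_{−π/2}. -/
def rotCW (v : Plane) : Plane := WithLp.toLp 2 ![v 1, -(v 0)]

/-- The unit normal N = ∇D/‖∇D‖ of the isoline. -/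
def unitN (D : ℝ × Plane → ℝ) (t : ℝ) (r : Plane) : Plane :=
  ‖sgrad D t r‖⁻¹ • sgrad D t r

/-- The unit tangent T = R_{−π/2} N of the isoline. -/
def unitT (D : ℝ × Plane → ℝ) (t : ℝ) (r : Plane) : Plane :=
  rotCW (unitN D t r)

/-- The density of isolines ρ = ‖∇D‖. -/
def rho (D : ℝ × Plane → ℝ) (t : ℝ) (r : Plane) : ℝ := ‖sgrad D t r‖

/-- The front velocity λ = −D′_t/‖∇D‖ of the isoline. -/
def lam (D : ℝ × Plane → ℝ) (t : ℝ) (r : Plane) : ℝ :=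
  -(dT D t r) / ‖sgrad D t r‖

/-- The proportional growth rate v_ρ = ⟨∇D′_t + λD″N, N⟩/‖∇D‖ of the density ρ
    along the moving isoline. -/
def vRho (D : ℝ × Plane → ℝ) (t : ℝ) (r : Plane) : ℝ :=
  ⟪sgradDt D t r + lam D t r • hess D t r (unitN D t r), unitN D t r⟫ / ‖sgrad D t r‖

/-- The angular velocity ω = −⟨∇D′_t + λD″N, T⟩/‖∇D‖ of rotation of the isoline. -/
def omg (D : ℝ × Plane → ℝ) (t : ℝ) (r : Plane) : ℝ :=
  -⟪sgradDt D t r + lam D t r • hess D t r (unitN D t r), unitT D t r⟫ / ‖sgrad D t r‖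

/-- The front acceleration α of the isoline. -/
def alph (D : ℝ × Plane → ℝ) (t : ℝ) (r : Plane) : ℝ :=
  -(dTT D t r + lam D t r * ⟪sgradDt D t r, unitN D t r⟫) / ‖sgrad D t r‖
    - lam D t r * vRho D t r

/-- The signed curvature κ = −⟨D″T, T⟩/‖∇D‖ of the isoline. -/
def kap (D : ℝ × Plane → ℝ) (t : ℝ) (r : Plane) : ℝ :=
  -⟪hess D t r (unitT D t r), unitT D t r⟫ / ‖sgrad D t r‖

/-- The proportional growth rate τ_ρ = ⟨D″N, T⟩/‖∇D‖ of the density ρ under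
    tangential displacement. -/
def tauRho (D : ℝ × Plane → ℝ) (t : ℝ) (r : Plane) : ℝ :=
  ⟪hess D t r (unitN D t r), unitT D t r⟫ / ‖sgrad D t r‖

/-- The proportional growth rate n_ρ = ⟨D″N, N⟩/‖∇D‖ of the density ρ under
    normal displacement. -/
def nRho (D : ℝ × Plane → ℝ) (t : ℝ) (r : Plane) : ℝ :=
  ⟪hess D t r (unitN D t r), unitN D t r⟫ / ‖sgrad D t r‖

/-- The angular velocity ω_∇ = −⟨∇D′_t, T⟩/‖∇D‖ of rotation of the gradient. -/
def omgGrad (D : ℝ × Plane → ℝ) (t : ℝ) (r : Plane) : ℝ :=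
  -⟪sgradDt D t r, unitT D t r⟫ / ‖sgrad D t r‖

/-- The unit velocity-orientation vector e(θ) = (cos θ, sin θ). -/
def eVec (θ : ℝ) : Plane := WithLp.toLp 2 ![Real.cos θ, Real.sin θ]


/-! ### Auxiliary machinery for the proof -/

/-- The linear map sending a functional on `ℝ × Plane` to the vector representing its
spatial part. -/
noncomputable def spatialVecL : ((ℝ × Plane) →L[ℝ] ℝ) →ₗ[ℝ] Plane where
  toFun L := (InnerProductSpace.toDual ℝ Plane).symm (L.comp (ContinuousLinearMap.inr ℝ ℝ Plane))
  map_add' := by intros; simp [ContinuousLinearMap.add_comp]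
  map_smul' := by intros; simp [ContinuousLinearMap.smul_comp]

/-- The continuous linear map sending a functional on `ℝ × Plane` to the vector representing
its spatial part. -/
noncomputable def spatialVec : ((ℝ × Plane) →L[ℝ] ℝ) →L[ℝ] Plane :=
  spatialVecL.toContinuousLinearMap

lemma inner_spatialVec (L : (ℝ × Plane) →L[ℝ] ℝ) (w : Plane) : ⟪spatialVec L, w⟫ = L (0, w) := by
  simp [spatialVec, spatialVecL, InnerProductSpace.toDual_symm_apply]

lemma spatialVec_eq_symm_toDual (L : (ℝ × Plane) →L[ℝ] ℝ) :
    spatialVec L = (InnerProductSpace.toDual ℝ Plane).symm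
      (L.comp (ContinuousLinearMap.inr ℝ ℝ Plane)) := by
  simp [spatialVec, spatialVecL]

/-- Decomposition of a vector of the plane in the orthonormal frame `(u, rotCW u)`. -/
lemma frame_decomp (u : Plane) (hu : ‖u‖ = 1) (v : Plane) :
    v = ⟪u, v⟫ • u + ⟪rotCW u, v⟫ • rotCW u := by
  have h1 : ⟪u, u⟫ = (1:ℝ) := by rw [real_inner_self_eq_norm_sq, hu]; norm_num
  have h2 : u 0 * u 0 + u 1 * u 1 = 1 := by
    simp only [PiLp.inner_apply, RCLike.inner_apply, conj_trivial, Fin.sum_univ_two] at h1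
    linarith
  ext i
  fin_cases i <;>
    simp only [PiLp.inner_apply, RCLike.inner_apply, Fin.sum_univ_two, rotCW, PiLp.add_apply,
      PiLp.smul_apply, smul_eq_mul, conj_trivial, Matrix.cons_val_zero, Matrix.cons_val_one,
      Matrix.head_cons, WithLp.ofLp_toLp, Fin.zero_eta, Fin.mk_one, Fin.isValue]
  · linear_combination (-(v 0)) * h2
  · linear_combination (-(v 1)) * h2

lemma normalize_aux {E : Type*} [AddCommGroup E] [Module ℝ E] (g0 w : E) {N : ℝ} (hN : N ≠ 0)
    (a b : ℝ) :
    N⁻¹ • ((a / N) • (N⁻¹ • g0) + b • w) + (-(a / N) / N ^ 2) • g0 = (b / N) • w := by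
  match_scalars <;> (field_simp; try ring)

/-- along the moving isoline the unit normal `N = ∇D/‖∇D‖` has derivative
`(⟨T, ∇D′_t + λ·D″N⟩/‖∇D‖)·T` at `s = 0`; consequently the angular velocity of the
isoline is `ω = −⟨∇D′_t + λ·D″N, T⟩/‖∇D‖` and `N(t+dt, r₊(dt)) = N − ω·T·dt + o(dt)`. -/
theorem normal_rotation_along_moving_isoline
    (D : ℝ × Plane → ℝ) (t : ℝ) (r : Plane)
    (hD : ContDiffAt ℝ 2 D (t, r)) (hgrad : sgrad D t r ≠ 0) :
    HasDerivAt (fun s => unitN D (t + s) (r + (s * lam D t r) • unitN D t r))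
      ((⟪unitT D t r, sgradDt D t r + lam D t r • hess D t r (unitN D t r)⟫
          / ‖sgrad D t r‖) • unitT D t r) 0 ∧
    (⟪unitT D t r, sgradDt D t r + lam D t r • hess D t r (unitN D t r)⟫
        / ‖sgrad D t r‖) • unitT D t r
      = -(omg D t r) • unitT D t r := by
  classical
  -- abbreviations
  have hev : ∀ᶠ q in nhds (t, r), ContDiffAt ℝ 2 D q := hD.eventually (by simp)
  set f' : ℝ × Plane → (ℝ × Plane) →L[ℝ] ℝ := fderiv ℝ D with hf'def
  have hf'c : ContDiffAt ℝ 1 f' (t, r) := hD.fderiv_right (by norm_num)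
  have hf'd : DifferentiableAt ℝ f' (t, r) := hf'c.differentiableAt (by norm_num)
  set A := fderiv ℝ f' (t, r) with hAdef
  have hsymm : ∀ a b, A a b = A b a := hD.isSymmSndFDerivAt (by simp)
  -- sgrad agrees with spatialVec ∘ f' near (t, r)
  have hFg : ∀ᶠ q : ℝ × Plane in nhds (t, r), sgrad D q.1 q.2 = spatialVec (f' q) := by
    filter_upwards [hev] with q hq
    have hd : DifferentiableAt ℝ D q := hq.differentiableAt (by norm_num)
    have hpart : HasFDerivAt (fun p => D (q.1, p))
        ((f' q).comp (ContinuousLinearMap.inr ℝ ℝ Plane)) q.2 :=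
      hd.hasFDerivAt.comp q.2 (hasFDerivAt_prodMk_right q.1 q.2)
    rw [show sgrad D q.1 q.2 = gradient (fun p => D (q.1, p)) q.2 from rfl, gradient,
      hpart.fderiv, spatialVec_eq_symm_toDual]
  -- the path and its derivative
  have hpath : HasDerivAt (fun s : ℝ => ((t + s, r + (s * lam D t r) • unitN D t r) : ℝ × Plane))
      ((1 : ℝ), lam D t r • unitN D t r) 0 := by
    have h1 : HasDerivAt (fun s : ℝ => t + s) 1 0 := by
      simpa using (hasDerivAt_id (0:ℝ)).const_add t
    have h2 : HasDerivAt (fun s : ℝ => r + (s * lam D t r) • unitN D t r)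
        (lam D t r • unitN D t r) 0 := by
      have := (((hasDerivAt_id (0:ℝ)).mul_const (lam D t r)).smul_const
        (unitN D t r)).const_add r
      simpa using this
    exact h1.prodMk h2
  have hx0 : ((t + (0:ℝ), r + ((0:ℝ) * lam D t r) • unitN D t r) : ℝ × Plane) = (t, r) := by
    simp
  -- derivative of spatialVec ∘ f' ∘ path
  have hcomp : HasDerivAt
      (fun s => spatialVec (f' (t + s, r + (s * lam D t r) • unitN D t r)))
      (spatialVec (A (1, lam D t r • unitN D t r))) 0 := by
    have h1 : HasFDerivAt f' A ((t + (0:ℝ), r + ((0:ℝ) * lam D t r) • unitN D t r) : ℝ × Plane) := by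
      rw [hx0]; exact hf'd.hasFDerivAt
    have h2 : HasDerivAt (fun s => f' (t + s, r + (s * lam D t r) • unitN D t r))
        (A (1, lam D t r • unitN D t r)) 0 := h1.comp_hasDerivAt 0 hpath
    exact spatialVec.hasFDerivAt.comp_hasDerivAt 0 h2
  -- hence the derivative of g := sgrad along the path
  have htend : Filter.Tendsto (fun s : ℝ => ((t + s, r + (s * lam D t r) • unitN D t r) : ℝ × Plane))
      (nhds 0) (nhds (t, r)) := by
    have := hpath.continuousAt
    rwa [ContinuousAt, hx0] at this
  have hgev : (fun s => sgrad D (t + s) (r + (s * lam D t r) • unitN D t r)) =ᶠ[nhds (0:ℝ)]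
      (fun s => spatialVec (f' (t + s, r + (s * lam D t r) • unitN D t r))) := by
    filter_upwards [htend.eventually hFg] with s hs using hs
  have hg : HasDerivAt (fun s => sgrad D (t + s) (r + (s * lam D t r) • unitN D t r))
      (spatialVec (A (1, lam D t r • unitN D t r))) 0 := hcomp.congr_of_eventuallyEq hgev
  -- identify the spatial Hessian
  have htend2 : Filter.Tendsto (fun p : Plane => ((t, p) : ℝ × Plane)) (nhds r) (nhds (t, r)) :=
    (Continuous.prodMk_right t).tendsto r
  have hhess : ∀ w : Plane, hess D t r w = spatialVec (A (0, w)) := by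
    intro w
    have hev2 : (fun p : Plane => sgrad D t p) =ᶠ[nhds r] fun p => spatialVec (f' (t, p)) := by
      filter_upwards [htend2.eventually hFg] with p hp using hp
    have hfd : HasFDerivAt (fun p : Plane => spatialVec (f' (t, p)))
        (spatialVec.comp (A.comp (ContinuousLinearMap.inr ℝ ℝ Plane))) r := by
      have h1 : HasFDerivAt f' A ((t, r) : ℝ × Plane) := hf'd.hasFDerivAt
      exact spatialVec.hasFDerivAt.comp r (h1.comp r (hasFDerivAt_prodMk_right t r))
    have hfe : fderiv ℝ (fun p => sgrad D t p) r
        = spatialVec.comp (A.comp (ContinuousLinearMap.inr ℝ ℝ Plane)) := by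
      rw [hev2.fderiv_eq]; exact hfd.fderiv
    simp [hess, hfe]
  -- identify the spatial gradient of the time derivative
  have hsgdt : ∀ w : Plane, ⟪sgradDt D t r, w⟫ = A (0, w) (1, 0) := by
    intro w
    have hev3 : (fun p : Plane => dT D t p) =ᶠ[nhds r]
        fun p => f' (t, p) ((1:ℝ), (0:Plane)) := by
      filter_upwards [htend2.eventually hev] with p hp
      have hd : DifferentiableAt ℝ D (t, p) := hp.differentiableAt (by norm_num)
      have hpr : HasDerivAt (fun s : ℝ => ((s, p) : ℝ × Plane)) ((1:ℝ), (0:Plane)) t :=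
        (hasDerivAt_id t).prodMk (hasDerivAt_const t p)
      have hder := (hd.hasFDerivAt.comp_hasDerivAt t hpr).deriv
      simpa [dT, hf'def, Function.comp_def] using hder
    have hfd : HasFDerivAt (fun p : Plane => f' (t, p) ((1:ℝ), (0:Plane)))
        ((ContinuousLinearMap.apply ℝ ℝ ((1:ℝ), (0:Plane))).comp
          (A.comp (ContinuousLinearMap.inr ℝ ℝ Plane))) r := by
      have h1 : HasFDerivAt f' A ((t, r) : ℝ × Plane) := hf'd.hasFDerivAt
      exact ((ContinuousLinearMap.apply ℝ ℝ ((1:ℝ), (0:Plane))).hasFDerivAt).comp r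
        (h1.comp r (hasFDerivAt_prodMk_right t r))
    have hfe : fderiv ℝ (fun p => dT D t p) r
        = (ContinuousLinearMap.apply ℝ ℝ ((1:ℝ), (0:Plane))).comp
          (A.comp (ContinuousLinearMap.inr ℝ ℝ Plane)) := by
      rw [hev3.fderiv_eq]; exact hfd.fderiv
    rw [show sgradDt D t r = gradient (fun p => dT D t p) r from rfl, gradient, hfe,
      InnerProductSpace.toDual_symm_apply]
    rfl
  -- the derivative vector is the stated one
  have hV : spatialVec (A (1, lam D t r • unitN D t r))
      = sgradDt D t r + lam D t r • hess D t r (unitN D t r) := by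
    refine ext_inner_right ℝ fun w => ?_
    rw [inner_spatialVec]
    have e1 : (((1:ℝ), lam D t r • unitN D t r) : ℝ × Plane)
        = ((1:ℝ), (0:Plane)) + lam D t r • (((0:ℝ), unitN D t r) : ℝ × Plane) := by
      simp [Prod.ext_iff]
    rw [e1, map_add, map_smul, ContinuousLinearMap.add_apply, ContinuousLinearMap.smul_apply,
      inner_add_left, real_inner_smul_left, hsgdt w, hhess, inner_spatialVec,
      hsymm (0, w) (1, 0)]
    simp
  -- abbreviations for the normalization step
  set g : ℝ → Plane := fun s => sgrad D (t + s) (r + (s * lam D t r) • unitN D t r) with hgdef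
  set V : Plane := spatialVec (A (1, lam D t r • unitN D t r)) with hVdef
  have hg00 : g 0 = sgrad D t r := by simp [hgdef]
  have hN0 : (0:ℝ) < ‖sgrad D t r‖ := norm_pos_iff.mpr hgrad
  have hNne : ‖sgrad D t r‖ ≠ 0 := ne_of_gt hN0
  -- derivative of the squared norm
  have hq : HasDerivAt (fun s => ⟪g s, g s⟫) (2 * ⟪sgrad D t r, V⟫) 0 := by
    have := hg.inner ℝ hg
    rw [hg00] at this
    refine this.congr_deriv ?_
    rw [real_inner_comm (sgrad D t r) V]
    ring
  have hq0 : ⟪g 0, g 0⟫ = ‖sgrad D t r‖ ^ 2 := by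
    rw [hg00, real_inner_self_eq_norm_sq]
  have hq0ne : ⟪g 0, g 0⟫ ≠ (0:ℝ) := by
    rw [hq0]; positivity
  -- derivative of the norm
  have hnorm : HasDerivAt (fun s => ‖g s‖) (⟪sgrad D t r, V⟫ / ‖sgrad D t r‖) 0 := by
    have hsq := (Real.hasDerivAt_sqrt hq0ne).comp 0 hq
    simp only [Function.comp_def] at hsq
    have heq : (fun s => Real.sqrt ⟪g s, g s⟫) = fun s => ‖g s‖ := by
      funext s; rw [norm_eq_sqrt_real_inner]
    rw [heq] at hsq
    refine hsq.congr_deriv ?_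
    rw [hq0]
    rw [Real.sqrt_sq (le_of_lt hN0)]
    field_simp
  -- derivative of the inverse norm
  have hinv : HasDerivAt (fun s => ‖g s‖⁻¹)
      (-(⟪sgrad D t r, V⟫ / ‖sgrad D t r‖) / ‖sgrad D t r‖ ^ 2) 0 := by
    have := hnorm.inv (by rw [hg00]; exact hNne)
    rwa [hg00] at this
  -- derivative of the normalized gradient
  have hmain : HasDerivAt (fun s => ‖g s‖⁻¹ • g s)
      (‖sgrad D t r‖⁻¹ • V
        + (-(⟪sgrad D t r, V⟫ / ‖sgrad D t r‖) / ‖sgrad D t r‖ ^ 2) • sgrad D t r) 0 := by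
    have := hinv.smul hg
    rwa [hg00] at this
  -- the frame decomposition
  have hnN : ‖unitN D t r‖ = 1 := by
    rw [unitN, norm_smul, norm_inv, norm_norm, inv_mul_cancel₀ hNne]
  have hdecomp := frame_decomp (unitN D t r) hnN V
  have hTdef : unitT D t r = rotCW (unitN D t r) := rfl
  -- rewrite the derivative value
  have hval : ‖sgrad D t r‖⁻¹ • V
        + (-(⟪sgrad D t r, V⟫ / ‖sgrad D t r‖) / ‖sgrad D t r‖ ^ 2) • sgrad D t r
      = (⟪unitT D t r, V⟫ / ‖sgrad D t r‖) • unitT D t r := by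
    rw [hTdef]
    nth_rewrite 1 [hdecomp]
    have hiN : ⟪unitN D t r, V⟫ = ⟪sgrad D t r, V⟫ / ‖sgrad D t r‖ := by
      rw [unitN, real_inner_smul_left]; ring
    rw [hiN, unitN]
    exact normalize_aux _ _ hNne _ _
  constructor
  · rw [hval] at hmain
    rw [hV] at hmain
    exact hmain
  · rw [omg, real_inner_comm, neg_div, neg_neg]
end
end

section
/- Let D : ℝ × ℝ² → ℝ be three times differentiable (in particular twice continuously differentiable) in a neighborhood of (t, r) with ∇D(t,r) ≠ 0; set N := ∇D(t,r)/‖∇D(t,r)‖, λ := −D′_t(t,r)/‖∇D(t,r)‖, and v_ρ := ⟨∇D′_t(t,r) + λ·D″(t,r)N, N⟩/‖∇D(t,r)‖. Then the function s ↦ −D′_t(t+s, r + s·λ·N)/‖∇D(t+s, r + s·λ·N)‖ is differentiable at s = 0 with derivative −(D″_tt(t,r) + λ·⟨∇D′_t(t,r), N⟩)/‖∇D(t,r)‖ − λ·v_ρ. (Consequently the front acceleration of the isoline equals α = −(D″_tt + λ⟨∇D′_t, N⟩)/‖∇D‖ − λ·v_ρ.) -/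
open Real Set
open scoped RealInnerProductSpace
noncomputable section

set_option maxHeartbeats 2000000 in
/-- along the moving isoline the front velocity `λ = −D′_t/‖∇D‖` has
derivative `−(D″_tt + λ⟨∇D′_t, N⟩)/‖∇D‖ − λ·v_ρ` at `s = 0`; consequently the front
acceleration of the isoline equals `α = −(D″_tt + λ⟨∇D′_t, N⟩)/‖∇D‖ − λ·v_ρ`. -/
theorem front_acceleration_formula
    (D : ℝ × Plane → ℝ) (t : ℝ) (r : Plane)
    (hD : ContDiffAt ℝ 3 D (t, r)) (hgrad : sgrad D t r ≠ 0) :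
    HasDerivAt (fun s => lam D (t + s) (r + (s * lam D t r) • unitN D t r))
      (-(dTT D t r + lam D t r * ⟪sgradDt D t r, unitN D t r⟫) / ‖sgrad D t r‖
        - lam D t r * vRho D t r) 0 ∧
    -(dTT D t r + lam D t r * ⟪sgradDt D t r, unitN D t r⟫) / ‖sgrad D t r‖
        - lam D t r * vRho D t r = alph D t r := by
  classical
  have m_pos : (0:ℝ) < ‖sgrad D t r‖ := norm_pos_iff.mpr hgrad
  have m_ne : ‖sgrad D t r‖ ≠ 0 := m_pos.ne'
  set N : Plane := unitN D t r with hNdef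
  set L : ℝ := lam D t r with hLdef
  -- total derivative setup
  set F : ℝ × Plane → (ℝ × Plane) →L[ℝ] ℝ := fderiv ℝ D with hFdef
  have hF2 : ContDiffAt ℝ 2 F (t, r) := hD.fderiv_right (by norm_num)
  have hB : HasFDerivAt F (fderiv ℝ F (t, r)) (t, r) :=
    (hF2.differentiableAt (by norm_num)).hasFDerivAt
  set B := fderiv ℝ F (t, r) with hBdef
  have hev3 : ∀ᶠ q in nhds (t, r), ContDiffAt ℝ 3 D q := hD.eventually (by simp)
  have hFd : ∀ᶠ q in nhds (t, r), HasFDerivAt D (F q) q := by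
    filter_upwards [hev3] with q hq
    exact (hq.differentiableAt (by norm_num)).hasFDerivAt
  have Bsymm : ∀ v w, B v w = B w v := fun v w =>
    second_derivative_symmetric_of_eventually hFd hB v w
  -- representation of dT via F
  have hdT : ∀ᶠ q in nhds (t, r), dT D q.1 q.2 = F q (1, 0) := by
    filter_upwards [hFd] with q hq
    have hq' : HasFDerivAt D (F q) (q.1, q.2) := by rw [Prod.mk.eta]; exact hq
    have h1 : HasDerivAt (fun s : ℝ => ((s, q.2) : ℝ × Plane)) ((1:ℝ), (0:Plane)) q.1 :=
      (hasDerivAt_id q.1).prodMk (hasDerivAt_const q.1 q.2)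
    exact (hq'.comp_hasDerivAt q.1 h1).deriv
  -- the continuous linear map Φ : ψ ↦ (toDual).symm (ψ ∘ inr)
  set Φ : ((ℝ × Plane) →L[ℝ] ℝ) →L[ℝ] Plane :=
    ((InnerProductSpace.toDual ℝ Plane).symm.toContinuousLinearEquiv :
        StrongDual ℝ Plane ≃L[ℝ] Plane).toContinuousLinearMap.comp
      ((ContinuousLinearMap.compL ℝ Plane (ℝ × Plane) ℝ).flip
        (ContinuousLinearMap.inr ℝ ℝ Plane)) with hPhidef
  have hPhi : ∀ (ψ : (ℝ × Plane) →L[ℝ] ℝ) (w : Plane), ⟪Φ ψ, w⟫ = ψ (0, w) := by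
    intro ψ w
    simp [hPhidef, ContinuousLinearMap.flip_apply, InnerProductSpace.toDual_symm_apply]
  -- representation of sgrad via F
  have hsg : ∀ᶠ q in nhds (t, r), sgrad D q.1 q.2 = Φ (F q) := by
    filter_upwards [hFd] with q hq
    have hq' : HasFDerivAt D (F q) (q.1, q.2) := by rw [Prod.mk.eta]; exact hq
    have h1 : HasFDerivAt (fun p : Plane => ((q.1, p) : ℝ × Plane))
        (ContinuousLinearMap.inr ℝ ℝ Plane) q.2 := hasFDerivAt_prodMk_right q.1 q.2
    have h2 : HasFDerivAt (fun p : Plane => D (q.1, p))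
        ((F q).comp (ContinuousLinearMap.inr ℝ ℝ Plane)) q.2 := hq'.comp q.2 h1
    rw [sgrad, gradient, h2.fderiv]
    simp [hPhidef]
  -- curve
  have hgamma : HasDerivAt (fun s : ℝ => ((t + s, r + (s * L) • N) : ℝ × Plane))
      (((1:ℝ), L • N) : ℝ × Plane) 0 := by
    refine HasDerivAt.prodMk ?_ ?_
    · simpa using (hasDerivAt_id (0:ℝ)).const_add t
    · simpa using ((hasDerivAt_mul_const L).smul_const N).const_add r
  have hpt : ((t + 0, r + ((0:ℝ) * L) • N) : ℝ × Plane) = (t, r) := by simp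
  set u : ℝ × Plane := ((1:ℝ), L • N) with hudef
  -- the function f1 = eval of F at (1,0), and its derivative along the curve
  set A : ((ℝ × Plane) →L[ℝ] ℝ) →L[ℝ] ℝ :=
    ContinuousLinearMap.apply ℝ ℝ (((1:ℝ), (0:Plane)) : ℝ × Plane) with hAdef
  have hf1 : HasFDerivAt (fun q => F q (1, 0)) (A.comp B) (t, r) :=
    A.hasFDerivAt.comp (t, r) hB
  have hf1' : HasFDerivAt (fun q => F q (1, 0)) (A.comp B)
      ((t + 0, r + ((0:ℝ) * L) • N) : ℝ × Plane) := hpt ▸ hf1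
  have hfc : HasDerivAt (fun s : ℝ => F (t + s, r + (s * L) • N) (1, 0)) (B u (1, 0)) 0 := by
    simpa [hAdef, Function.comp_def] using hf1'.comp_hasDerivAt 0 hgamma
  -- the function g1 = Φ ∘ F and its derivative along the curve
  have hg1 : HasFDerivAt (fun q => Φ (F q)) (Φ.comp B) (t, r) := Φ.hasFDerivAt.comp (t, r) hB
  have hg1' : HasFDerivAt (fun q => Φ (F q)) (Φ.comp B)
      ((t + 0, r + ((0:ℝ) * L) • N) : ℝ × Plane) := hpt ▸ hg1
  set V : Plane := Φ (B u) with hVdef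
  have hgc : HasDerivAt (fun s : ℝ => Φ (F (t + s, r + (s * L) • N))) V 0 := by
    simpa [Function.comp_def] using hg1'.comp_hasDerivAt 0 hgamma
  have hG0 : Φ (F (t, r)) = sgrad D t r := (hsg.self_of_nhds).symm
  have hF0 : F (t, r) (1, 0) = dT D t r := (hdT.self_of_nhds).symm
  -- derivative of the norm of g1 along the curve
  have hnorm : HasDerivAt (fun s : ℝ => ‖Φ (F (t + s, r + (s * L) • N))‖)
      (⟪V, sgrad D t r⟫ / ‖sgrad D t r‖) 0 := by
    have hq : HasDerivAt (fun s : ℝ =>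
        ⟪Φ (F (t + s, r + (s * L) • N)), Φ (F (t + s, r + (s * L) • N))⟫)
        (⟪Φ (F (t + 0, r + ((0:ℝ) * L) • N)), V⟫ + ⟪V, Φ (F (t + 0, r + ((0:ℝ) * L) • N))⟫) 0 :=
      hgc.inner ℝ hgc
    have hq' : HasDerivAt (fun s : ℝ =>
        ⟪Φ (F (t + s, r + (s * L) • N)), Φ (F (t + s, r + (s * L) • N))⟫)
        (2 * ⟪V, sgrad D t r⟫) 0 := by
      convert hq using 1
      rw [hpt, hG0, real_inner_comm (sgrad D t r) V]; ring
    have hq0 : (⟪Φ (F (t + 0, r + ((0:ℝ) * L) • N)), Φ (F (t + 0, r + ((0:ℝ) * L) • N))⟫ : ℝ)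
        = ‖sgrad D t r‖ * ‖sgrad D t r‖ := by
      rw [hpt, hG0, real_inner_self_eq_norm_mul_norm]
    have hq0ne : (⟪Φ (F (t + 0, r + ((0:ℝ) * L) • N)), Φ (F (t + 0, r + ((0:ℝ) * L) • N))⟫ : ℝ) ≠ 0 := by
      rw [hq0]; positivity
    have hs := (Real.hasDerivAt_sqrt hq0ne).comp 0 hq'
    have heq : ((fun x => Real.sqrt x) ∘ (fun s : ℝ =>
        ⟪Φ (F (t + s, r + (s * L) • N)), Φ (F (t + s, r + (s * L) • N))⟫))
        = fun s : ℝ => ‖Φ (F (t + s, r + (s * L) • N))‖ := by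
      funext s
      rw [Function.comp_apply, real_inner_self_eq_norm_mul_norm,
        Real.sqrt_mul_self (norm_nonneg _)]
    rw [heq] at hs
    refine hs.congr_deriv ?_
    rw [hq0, Real.sqrt_mul_self (norm_nonneg _)]
    field_simp
  -- derivative of the quotient
  have hne0 : ‖Φ (F (t + 0, r + ((0:ℝ) * L) • N))‖ ≠ 0 := by rw [hpt, hG0]; exact m_ne
  have hdiv : HasDerivAt (fun s : ℝ =>
      -(F (t + s, r + (s * L) • N) (1, 0)) / ‖Φ (F (t + s, r + (s * L) • N))‖)
      ((-(B u (1, 0)) * ‖Φ (F (t + 0, r + ((0:ℝ) * L) • N))‖ -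
        -(F (t + 0, r + ((0:ℝ) * L) • N) (1, 0)) * (⟪V, sgrad D t r⟫ / ‖sgrad D t r‖)) /
        ‖Φ (F (t + 0, r + ((0:ℝ) * L) • N))‖ ^ 2) 0 :=
    (hfc.neg).div hnorm hne0
  -- identify the function with lam along the curve
  have hcont : Filter.Tendsto (fun s : ℝ => ((t + s, r + (s * L) • N) : ℝ × Plane))
      (nhds 0) (nhds (t, r)) := by
    have := hgamma.continuousAt
    rwa [ContinuousAt, hpt] at this
  have heqfun : (fun s : ℝ => lam D (t + s) (r + (s * L) • N)) =ᶠ[nhds 0]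
      (fun s : ℝ => -(F (t + s, r + (s * L) • N) (1, 0)) / ‖Φ (F (t + s, r + (s * L) • N))‖) := by
    filter_upwards [hcont.eventually (hdT.and hsg)] with s hs
    rw [lam, hs.1, hs.2]
  have hmain := hdiv.congr_of_eventuallyEq heqfun
  -- identify dTT
  have hdTT : dTT D t r = B ((1:ℝ), (0:Plane)) ((1:ℝ), (0:Plane)) := by
    have hc : Filter.Tendsto (fun s : ℝ => ((s, r) : ℝ × Plane)) (nhds t) (nhds (t, r)) :=
      (Continuous.prodMk continuous_id continuous_const).continuousAt
    have hEq : (fun s : ℝ => dT D s r) =ᶠ[nhds t] fun s : ℝ => F (s, r) (1, 0) := by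
      filter_upwards [hc.eventually hdT] with s hs using hs
    have h1 : HasDerivAt (fun s : ℝ => ((s, r) : ℝ × Plane)) ((1:ℝ), (0:Plane)) t :=
      (hasDerivAt_id t).prodMk (hasDerivAt_const t r)
    have hder : HasDerivAt (fun s : ℝ => F (s, r) (1, 0))
        (B ((1:ℝ), (0:Plane)) ((1:ℝ), (0:Plane))) t := by
      simpa [hAdef, Function.comp_def] using hf1.comp_hasDerivAt t h1
    rw [dTT, hEq.deriv_eq, hder.deriv]
  -- identify sgradDt pairings
  have hc2 : Filter.Tendsto (fun p : Plane => ((t, p) : ℝ × Plane)) (nhds r) (nhds (t, r)) :=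
    (Continuous.prodMk continuous_const continuous_id).continuousAt
  have h1r : HasFDerivAt (fun p : Plane => ((t, p) : ℝ × Plane))
      (ContinuousLinearMap.inr ℝ ℝ Plane) r := hasFDerivAt_prodMk_right t r
  have hsgDt : ∀ w : Plane, ⟪sgradDt D t r, w⟫ = B ((0:ℝ), w) ((1:ℝ), (0:Plane)) := by
    intro w
    have hEq : (fun p : Plane => dT D t p) =ᶠ[nhds r] fun p : Plane => F (t, p) (1, 0) := by
      filter_upwards [hc2.eventually hdT] with p hp using hp
    have hder : HasFDerivAt (fun p : Plane => F (t, p) (1, 0))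
        ((A.comp B).comp (ContinuousLinearMap.inr ℝ ℝ Plane)) r := hf1.comp r h1r
    rw [sgradDt, gradient, hEq.fderiv_eq, hder.fderiv]
    simp [hAdef, InnerProductSpace.toDual_symm_apply]
  -- identify hess pairings
  have hhess : ∀ w : Plane, ⟪hess D t r N, w⟫ = B ((0:ℝ), N) ((0:ℝ), w) := by
    intro w
    have hEq : (fun p : Plane => sgrad D t p) =ᶠ[nhds r] fun p : Plane => Φ (F (t, p)) := by
      filter_upwards [hc2.eventually hsg] with p hp using hp
    have hder : HasFDerivAt (fun p : Plane => Φ (F (t, p)))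
        ((Φ.comp B).comp (ContinuousLinearMap.inr ℝ ℝ Plane)) r := hg1.comp r h1r
    rw [hess, hEq.fderiv_eq, hder.fderiv]
    simpa using hPhi (B (0, N)) w
  -- decompose u
  have hu : (u : ℝ × Plane) = ((1:ℝ), (0:Plane)) + L • ((0:ℝ), N) := by
    rw [hudef]; ext <;> simp
  -- identify V
  have hVeq : V = sgradDt D t r + L • hess D t r N := by
    refine (ext_inner_right ℝ ?_).symm
    intro w
    rw [inner_add_left, real_inner_smul_left, hsgDt w, hhess w]
    have h1 : ⟪V, w⟫ = B u (0, w) := hPhi (B u) w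
    rw [h1, hu]
    simp only [map_add, map_smul, ContinuousLinearMap.add_apply, ContinuousLinearMap.coe_smul',
      Pi.smul_apply, smul_eq_mul]
    rw [Bsymm ((0:ℝ), w) ((1:ℝ), (0:Plane))]
  -- identify B u (1,0)
  have hBu : B u ((1:ℝ), (0:Plane)) = dTT D t r + L * ⟪sgradDt D t r, N⟫ := by
    rw [hu]
    simp only [map_add, map_smul, ContinuousLinearMap.add_apply, ContinuousLinearMap.coe_smul',
      Pi.smul_apply, smul_eq_mul]
    rw [← hdTT, ← hsgDt N]
  -- inner of V with sgrad
  have hVs : ⟪V, sgrad D t r⟫ = ‖sgrad D t r‖ * ⟪V, N⟫ := by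
    have : (N : Plane) = ‖sgrad D t r‖⁻¹ • sgrad D t r := rfl
    rw [this, real_inner_smul_right]
    field_simp
  have hvrho : vRho D t r = ⟪V, N⟫ / ‖sgrad D t r‖ := by
    rw [vRho, hVeq]
  -- final: identify derivative value
  refine ⟨?_, rfl⟩
  refine hmain.congr_deriv ?_
  symm
  rw [hpt, hG0, hF0, hBu, hVs, hvrho]
  have hL' : L = -(dT D t r) / ‖sgrad D t r‖ := rfl
  rw [hL']
  field_simp
end
end

section
/- Let D : ℝ × ℝ² → ℝ be twice continuously differentiable in a neighborhood of (t, r) with ∇D(t,r) ≠ 0; set N := ∇D(t,r)/‖∇D(t,r)‖, T := R_{−π/2}N, λ := −D′_t(t,r)/‖∇D(t,r)‖, and ω := −⟨∇D′_t(t,r) + λ·D″(t,r)N, T⟩/‖∇D(t,r)‖. Then the function s ↦ −D′_t(t, r + s·T)/‖∇D(t, r + s·T)‖ is differentiable at s = 0 with derivative ω; in other words, the front velocity satisfies λ(t, r + T·ds) = λ + ω·ds + o(ds). -/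
open Real Set Topology
open scoped RealInnerProductSpace
noncomputable section

private lemma inner_gradient_apply (f : Plane → ℝ) (x v : Plane) :
    ⟪gradient f x, v⟫ = fderiv ℝ f x v := by
  rw [gradient]; exact InnerProductSpace.toDual_symm_apply

private lemma spatial_contDiffAt (D : ℝ × Plane → ℝ) (t : ℝ) (r : Plane)
    (hD : ContDiffAt ℝ 2 D (t, r)) : ContDiffAt ℝ 2 (fun p : Plane => D (t, p)) r :=
  hD.comp r (ContDiffAt.prodMk contDiffAt_const contDiffAt_id)

private lemma sgrad_differentiableAt (D : ℝ × Plane → ℝ) (t : ℝ) (r : Plane)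
    (hD : ContDiffAt ℝ 2 D (t, r)) :
    DifferentiableAt ℝ (fun p => sgrad D t p) r := by
  have hfd : ContDiffAt ℝ 1 (fderiv ℝ (fun p : Plane => D (t, p))) r :=
    (spatial_contDiffAt D t r hD).fderiv_right (by norm_num)
  have : (fun p => sgrad D t p) = fun p =>
      (InnerProductSpace.toDual ℝ Plane).symm (fderiv ℝ (fun q : Plane => D (t, q)) p) := rfl
  rw [this]
  exact (((InnerProductSpace.toDual ℝ Plane).symm.contDiff.contDiffAt).comp r hfd).differentiableAt
    one_ne_zero

private lemma hess_symm (D : ℝ × Plane → ℝ) (t : ℝ) (r : Plane)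
    (hD : ContDiffAt ℝ 2 D (t, r)) (v w : Plane) :
    ⟪hess D t r v, w⟫ = ⟪hess D t r w, v⟫ := by
  have hF := spatial_contDiffAt D t r hD
  have hfd : ContDiffAt ℝ 1 (fderiv ℝ (fun p : Plane => D (t, p))) r :=
    hF.fderiv_right (by norm_num)
  have hGd := sgrad_differentiableAt D t r hD
  have key : ∀ u : Plane, ∀ w : Plane, ⟪w, hess D t r u⟫
      = fderiv ℝ (fderiv ℝ (fun p : Plane => D (t, p))) r u w := by
    intro u w
    have h1 : HasFDerivAt (fun p => ⟪w, sgrad D t p⟫)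
        ((innerSL ℝ w).comp (fderiv ℝ (fun p => sgrad D t p) r)) r :=
      (innerSL ℝ w).hasFDerivAt.comp r hGd.hasFDerivAt
    have h2 : HasFDerivAt (fun p : Plane => fderiv ℝ (fun q : Plane => D (t, q)) p w)
        ((ContinuousLinearMap.apply ℝ ℝ w).comp
          (fderiv ℝ (fderiv ℝ (fun p : Plane => D (t, p))) r)) r :=
      (ContinuousLinearMap.apply ℝ ℝ w).hasFDerivAt.comp r
        (hfd.differentiableAt one_ne_zero).hasFDerivAt
    have heq : (fun p => ⟪w, sgrad D t p⟫)
        = fun p : Plane => fderiv ℝ (fun q : Plane => D (t, q)) p w := by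
      funext p
      rw [real_inner_comm]
      exact inner_gradient_apply _ p w
    have h3 : HasFDerivAt (fun p => ⟪w, sgrad D t p⟫)
        ((ContinuousLinearMap.apply ℝ ℝ w).comp
          (fderiv ℝ (fderiv ℝ (fun p : Plane => D (t, p))) r)) r := heq ▸ h2
    have h4 := h1.unique h3
    have := congrFun (congrArg (fun (L : Plane →L[ℝ] ℝ) => (L : Plane → ℝ)) h4) u
    simpa [hess, real_inner_comm] using this
  have hsymm : IsSymmSndFDerivAt ℝ (fun p : Plane => D (t, p)) r :=
    hF.isSymmSndFDerivAt (by norm_num)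
  rw [real_inner_comm w (hess D t r v), real_inner_comm v (hess D t r w), key v w, key w v]
  exact hsymm v w

/-- under tangential displacement the front velocity satisfies
`λ(t, r + T·ds) = λ + ω·ds + o(ds)`, i.e. `s ↦ λ(t, r + s·T)` has derivative
`ω = −⟨∇D′_t + λ·D″N, T⟩/‖∇D‖` at `s = 0`. -/
theorem front_velocity_tangential_growth
    (D : ℝ × Plane → ℝ) (t : ℝ) (r : Plane)
    (hD : ContDiffAt ℝ 2 D (t, r)) (hgrad : sgrad D t r ≠ 0) :
    HasDerivAt (fun s : ℝ => lam D t (r + s • unitT D t r)) (omg D t r) 0 := by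
  set T := unitT D t r with hTdef
  have hg0 : ‖sgrad D t r‖ ≠ 0 := norm_ne_zero_iff.mpr hgrad
  have hu0 : r + (0:ℝ) • T = r := by simp
  have hu : HasDerivAt (fun s : ℝ => r + s • T) T 0 := by
    simpa using ((hasDerivAt_id (0:ℝ)).smul_const T).const_add r
  -- differentiability of p ↦ dT D t p at r
  have hDt : ContDiffAt ℝ 1 (fderiv ℝ D) (t, r) := hD.fderiv_right (by norm_num)
  have hk : ContDiffAt ℝ 1 (fun p : Plane => fderiv ℝ D (t, p) ((1:ℝ), (0:Plane))) r :=
    (ContinuousLinearMap.apply ℝ ℝ ((1:ℝ), (0:Plane))).contDiff.contDiffAt.comp r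
      (hDt.comp r (ContDiffAt.prodMk contDiffAt_const contDiffAt_id))
  have hev : ∀ᶠ p in 𝓝 r, DifferentiableAt ℝ D (t, p) := by
    have h1 : ∀ᶠ q in 𝓝 (t, r), ContDiffAt ℝ 2 D q := hD.eventually (by simp)
    have h2 : ContinuousAt (fun p : Plane => (t, p)) r :=
      (continuous_const.prodMk continuous_id).continuousAt
    filter_upwards [h2.tendsto.eventually h1] with p hp
    exact hp.differentiableAt two_ne_zero
  have heq : (fun p : Plane => dT D t p)
      =ᶠ[𝓝 r] fun p => fderiv ℝ D (t, p) ((1:ℝ), (0:Plane)) := by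
    filter_upwards [hev] with p hp
    have hcomp : HasDerivAt (fun s => D (s, p)) (fderiv ℝ D (t, p) ((1:ℝ), (0:Plane))) t :=
      hp.hasFDerivAt.comp_hasDerivAt t ((hasDerivAt_id t).prodMk (hasDerivAt_const t p))
    exact hcomp.deriv
  have hhd : DifferentiableAt ℝ (fun p => dT D t p) r :=
    (hk.differentiableAt one_ne_zero).congr_of_eventuallyEq heq
  have hGradDt : HasGradientAt (fun p => dT D t p) (sgradDt D t r) r := hhd.hasGradientAt
  -- dT along the path
  have hh : HasDerivAt (fun s : ℝ => dT D t (r + s • T)) ⟪sgradDt D t r, T⟫ 0 := by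
    have h0 : HasFDerivAt (fun p => dT D t p)
        (InnerProductSpace.toDual ℝ Plane (sgradDt D t r)) (r + (0:ℝ) • T) := by
      rw [hu0]; exact hGradDt.hasFDerivAt
    have := h0.comp_hasDerivAt 0 hu
    exact this.congr_deriv (by simp [InnerProductSpace.toDual_apply_apply])
  -- sgrad along the path
  have hGd := sgrad_differentiableAt D t r hD
  have hGpath : HasDerivAt (fun s : ℝ => sgrad D t (r + s • T)) (hess D t r T) 0 := by
    have h0 : HasFDerivAt (fun p => sgrad D t p)
        (fderiv ℝ (fun p => sgrad D t p) r) (r + (0:ℝ) • T) := by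
      rw [hu0]; exact hGd.hasFDerivAt
    exact h0.comp_hasDerivAt 0 hu
  -- norm of sgrad along the path
  have hip : HasDerivAt (fun s : ℝ => ⟪sgrad D t (r + s • T), sgrad D t (r + s • T)⟫)
      (2 * ⟪hess D t r T, sgrad D t r⟫) 0 := by
    have := hGpath.inner ℝ hGpath
    rw [hu0] at this
    refine this.congr_deriv (Eq.symm ?_)
    rw [real_inner_comm]; ring
  have hnorm : HasDerivAt (fun s : ℝ => ‖sgrad D t (r + s • T)‖)
      (⟪hess D t r T, sgrad D t r⟫ / ‖sgrad D t r‖) 0 := by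
    have h1 : (fun s : ℝ => ‖sgrad D t (r + s • T)‖)
        = fun s => Real.sqrt ⟪sgrad D t (r + s • T), sgrad D t (r + s • T)⟫ := by
      funext s
      rw [real_inner_self_eq_norm_mul_norm, Real.sqrt_mul_self (norm_nonneg _)]
    rw [h1]
    have hx : ⟪sgrad D t (r + (0:ℝ) • T), sgrad D t (r + (0:ℝ) • T)⟫ ≠ 0 := by
      rw [hu0, real_inner_self_eq_norm_mul_norm]
      exact mul_ne_zero hg0 hg0
    have := hip.sqrt hx
    rw [hu0, real_inner_self_eq_norm_mul_norm, Real.sqrt_mul_self (norm_nonneg _)] at this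
    convert this using 1
    field_simp
  -- combine
  have hne : ‖sgrad D t (r + (0:ℝ) • T)‖ ≠ 0 := by rw [hu0]; exact hg0
  have hlam := (hh.neg.div hnorm hne)
  have hfun : (fun s : ℝ => lam D t (r + s • T))
      = fun s : ℝ => -dT D t (r + s • T) / ‖sgrad D t (r + s • T)‖ := rfl
  rw [hfun]
  refine hlam.congr_deriv (Eq.symm ?_)
  rw [hu0]
  -- algebraic identity
  have hNlin : hess D t r (unitN D t r) = ‖sgrad D t r‖⁻¹ • hess D t r (sgrad D t r) := by
    show fderiv ℝ (fun p => sgrad D t p) r (‖sgrad D t r‖⁻¹ • sgrad D t r) = _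
    exact (fderiv ℝ (fun p => sgrad D t p) r).map_smul _ _
  have hsym : ⟪hess D t r (sgrad D t r), T⟫ = ⟪hess D t r T, sgrad D t r⟫ :=
    hess_symm D t r hD (sgrad D t r) T
  rw [omg, hNlin]
  rw [inner_add_left, real_inner_smul_left, real_inner_smul_left, hsym, lam]
  simp only [Pi.neg_apply, hu0, ← hTdef]
  field_simp
  ring
end
end

section
/- Let D : ℝ × ℝ² → ℝ be twice continuously differentiable in a neighborhood of (t, r) with ∇D(t,r) ≠ 0; set N := ∇D(t,r)/‖∇D(t,r)‖, λ := −D′_t(t,r)/‖∇D(t,r)‖, and v_ρ := ⟨∇D′_t(t,r) + λ·D″(t,r)N, N⟩/‖∇D(t,r)‖. Then the function s ↦ −D′_t(t, r + s·N)/‖∇D(t, r + s·N)‖ is differentiable at s = 0 with derivative −v_ρ; in other words, the front velocity satisfies λ(t, r + N·ds) = λ − v_ρ·ds + o(ds). -/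
open Real Set
open scoped RealInnerProductSpace
noncomputable section

/-- under normal displacement the front velocity satisfies
`λ(t, r + N·ds) = λ − v_ρ·ds + o(ds)`, i.e. `s ↦ λ(t, r + s·N)` has derivative
`−v_ρ` at `s = 0`, where `v_ρ = ⟨∇D′_t + λ·D″N, N⟩/‖∇D‖`. -/
theorem front_velocity_normal_growth
    (D : ℝ × Plane → ℝ) (t : ℝ) (r : Plane)
    (hD : ContDiffAt ℝ 2 D (t, r)) (hgrad : sgrad D t r ≠ 0) :
    HasDerivAt (fun s : ℝ => lam D t (r + s • unitN D t r)) (-(vRho D t r)) 0 := by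
  have hρ : ‖sgrad D t r‖ ≠ 0 := norm_ne_zero_iff.mpr hgrad
  set N : Plane := unitN D t r with hN
  have hline : HasDerivAt (fun s : ℝ => r + s • N) N 0 := by
    simpa using (((hasDerivAt_id (0:ℝ)).smul_const N).const_add r)
  -- D(t,·) is C² at r
  have hDt2 : ContDiffAt ℝ 2 (fun p : Plane => D (t, p)) r := by
    exact hD.comp r (ContDiffAt.prodMk contDiffAt_const contDiffAt_id)
  -- sgrad is C¹ at r
  have hg : ContDiffAt ℝ 1 (fun p => sgrad D t p) r := by
    have h1 : ContDiffAt ℝ 1 (fderiv ℝ (fun p : Plane => D (t, p))) r :=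
      hDt2.fderiv_right (by norm_num)
    have h2 : ContDiff ℝ 1 (fun L : Plane →L[ℝ] ℝ =>
        (InnerProductSpace.toDual ℝ Plane).symm L) :=
      (InnerProductSpace.toDual ℝ Plane).symm.contDiff
    exact h2.comp_contDiffAt r h1
  have hgdiff : DifferentiableAt ℝ (fun p => sgrad D t p) r :=
    hg.differentiableAt one_ne_zero
  -- derivative of s ↦ sgrad along the line
  have hgs : HasDerivAt (fun s : ℝ => sgrad D t (r + s • N)) (hess D t r N) 0 := by
    have hfd : HasFDerivAt (fun p => sgrad D t p)
        (fderiv ℝ (fun p => sgrad D t p) r) ((fun s : ℝ => r + s • N) 0) := by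
      simpa using hgdiff.hasFDerivAt
    simpa [hess, Function.comp_def] using hfd.comp_hasDerivAt 0 hline
  -- derivative of the norm along the line
  have hinner : HasDerivAt (fun s : ℝ => ⟪sgrad D t (r + s • N), sgrad D t (r + s • N)⟫)
      (⟪sgrad D t r, hess D t r N⟫ + ⟪hess D t r N, sgrad D t r⟫) 0 := by
    simpa using (hgs.inner ℝ hgs)
  have hself : ⟪sgrad D t r, sgrad D t r⟫ ≠ 0 := by
    rw [real_inner_self_eq_norm_sq]; positivity
  have hnorm : HasDerivAt (fun s : ℝ => ‖sgrad D t (r + s • N)‖)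
      (⟪hess D t r N, sgrad D t r⟫ / ‖sgrad D t r‖) 0 := by
    have hs := hinner.sqrt (by simpa using hself)
    have : (fun s : ℝ => Real.sqrt ⟪sgrad D t (r + s • N), sgrad D t (r + s • N)⟫)
        = fun s : ℝ => ‖sgrad D t (r + s • N)‖ := by
      funext s; rw [norm_eq_sqrt_real_inner]
    rw [this] at hs
    convert hs using 1
    rw [real_inner_comm (sgrad D t r) (hess D t r N)]
    rw [show r + (0:ℝ) • N = r by simp, ← norm_eq_sqrt_real_inner]
    field_simp
    ring
  -- nice representation of dT near r
  set φ : Plane → ℝ := fun p => fderiv ℝ D (t, p) (1, 0) with hφ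
  have hev : ∀ᶠ p in nhds r, dT D t p = φ p := by
    have hDev : ∀ᶠ q in nhds ((t, r) : ℝ × Plane), ContDiffAt ℝ 2 D q :=
      hD.eventually (by norm_num)
    have hc : ContinuousAt (fun p : Plane => ((t, p) : ℝ × Plane)) r :=
      (continuous_const.prodMk continuous_id).continuousAt
    filter_upwards [hc.eventually hDev] with p hp
    have hdiff : DifferentiableAt ℝ D (t, p) := hp.differentiableAt two_ne_zero
    have hcurve : HasDerivAt (fun s : ℝ => ((s, p) : ℝ × Plane)) ((1:ℝ), (0:Plane)) t :=
      (hasDerivAt_id t).prodMk (hasDerivAt_const t p)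
    have := hdiff.hasFDerivAt.comp_hasDerivAt t hcurve
    simpa [dT, hφ, Function.comp_def] using this.deriv
  have hφdiff : DifferentiableAt ℝ φ r := by
    have h1 : ContDiffAt ℝ 1 (fderiv ℝ D) ((t, r) : ℝ × Plane) :=
      hD.fderiv_right (by norm_num)
    have h2 : ContDiffAt ℝ 1 (fun p : Plane => fderiv ℝ D (t, p)) r :=
      h1.comp r (ContDiffAt.prodMk contDiffAt_const contDiffAt_id)
    have h3 : ContDiffAt ℝ 1 φ r :=
      (ContinuousLinearMap.apply ℝ ℝ (((1:ℝ), (0:Plane)) : ℝ × Plane)).contDiff.comp_contDiffAt r h2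
    exact h3.differentiableAt one_ne_zero
  have hdT : HasDerivAt (fun s : ℝ => dT D t (r + s • N)) (fderiv ℝ φ r N) 0 := by
    have hφline : HasDerivAt (fun s : ℝ => φ (r + s • N)) (fderiv ℝ φ r N) 0 := by
      have hfd : HasFDerivAt φ (fderiv ℝ φ r) ((fun s : ℝ => r + s • N) 0) := by
        simpa using hφdiff.hasFDerivAt
      simpa [Function.comp_def] using hfd.comp_hasDerivAt 0 hline
    have heq' : (fun s : ℝ => dT D t (r + s • N)) =ᶠ[nhds 0] (fun s : ℝ => φ (r + s • N)) := by
      have hcl : Filter.Tendsto (fun s : ℝ => r + s • N) (nhds 0) (nhds r) := by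
        have h := hline.continuousAt
        unfold ContinuousAt at h
        simpa using h
      filter_upwards [hcl.eventually hev] with s hs using hs
    exact (heq'.hasDerivAt_iff).mpr hφline
  have hsg : ⟪sgradDt D t r, N⟫ = fderiv ℝ φ r N := by
    have hfe : fderiv ℝ (fun p => dT D t p) r = fderiv ℝ φ r := Filter.EventuallyEq.fderiv_eq hev
    rw [sgradDt]
    unfold gradient
    rw [InnerProductSpace.toDual_symm_apply, hfe]
  -- assemble via quotient rule
  have hu : HasDerivAt (fun s : ℝ => -(dT D t (r + s • N))) (-(fderiv ℝ φ r N)) 0 := hdT.neg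
  have hdiv := hu.div hnorm (by simpa using hρ)
  have hBN : ⟪hess D t r N, N⟫ = ‖sgrad D t r‖⁻¹ * ⟪hess D t r N, sgrad D t r⟫ := by
    rw [hN, unitN, real_inner_smul_right]
  have : HasDerivAt (fun s : ℝ => lam D t (r + s • N))
      ((-(fderiv ℝ φ r N) * ‖sgrad D t (r + (0:ℝ) • N)‖ -
        -(dT D t (r + (0:ℝ) • N)) * (⟪hess D t r N, sgrad D t r⟫ / ‖sgrad D t r‖)) /
        ‖sgrad D t (r + (0:ℝ) • N)‖ ^ 2) 0 := hdiv
  convert this using 1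
  simp only [zero_smul, add_zero]
  rw [vRho, ← hN, inner_add_left, real_inner_smul_left, hsg, hBN, lam]
  field_simp
  ring
end
end
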